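/- Let x₀ ∈ (0,1) be the unique solution of ψ(x₀) = μ. Then 𝒢(x₀) − (x₀ − μ)·G(x₀) + ∫_{θ**(x₀)}^{x₀} ((1−F(x₀))/f(θ))·g(ψ(θ,x₀)) dθ > 0; in particular, already 𝒢(x₀) − (x₀ − μ)·G(x₀) = μ·G(x₀) − ∫₀^{x₀} ω g(ω) dω > 0. -/

import Mathlib

open MeasureTheory

/-- `F(x) = ∫₀^x f`, with the convention that it is `0` for `x ≤ 0`. -/
noncomputable def cdf (f : ℝ → ℝ) (x : ℝ) : ℝ := ∫ t in Set.Ioc (0:ℝ) x, f t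

/-- `𝒢(x) = ∫₀^x G(y) dy`, the left-hand integral of the cdf of `g`. -/
noncomputable def calG (g : ℝ → ℝ) (x : ℝ) : ℝ := ∫ y in Set.Ioc (0:ℝ) x, cdf g y

/-- `μ = ∫₀¹ ω g(ω) dω`, the mean cost. -/
noncomputable def muG (g : ℝ → ℝ) : ℝ := ∫ t in Set.Ioc (0:ℝ) 1, t * g t

/-- The virtual valuation `ψ(θ) = θ − (1 − F(θ))/f(θ)`. -/
noncomputable def psi (f : ℝ → ℝ) (θ : ℝ) : ℝ := θ - (1 - cdf f θ) / f θ

/-- The truncated virtual valuation `ψ(θ,x) = θ − (F(x) − F(θ))/f(θ)`. -/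
noncomputable def psiT (f : ℝ → ℝ) (x θ : ℝ) : ℝ := θ - (cdf f x - cdf f θ) / f θ

/-- Integration by parts: `𝒢(x₀) = x₀ G(x₀) − ∫₀^{x₀} ω g(ω) dω`. -/
lemma ibp_aux (g : ℝ → ℝ) (hg_int : IntegrableOn g (Set.Icc 0 1))
    (hg_cont : ContinuousOn g (Set.Icc 0 1))
    (x₀ : ℝ) (h0 : 0 < x₀) (h1 : x₀ < 1) :
    calG g x₀ = x₀ * cdf g x₀ - ∫ ω in (0:ℝ)..x₀, ω * g ω := by
  have hsub : Set.Icc (0:ℝ) x₀ ⊆ Set.Icc 0 1 := Set.Icc_subset_Icc le_rfl h1.le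
  have hg_int' : IntegrableOn g (Set.Icc 0 x₀) := hg_int.mono_set hsub
  have htg_int : IntegrableOn (fun t => t * g t) (Set.Icc 0 1) :=
    ((continuousOn_id.mul hg_cont).integrableOn_Icc)
  have htg_int' : IntegrableOn (fun t => t * g t) (Set.Icc 0 x₀) := htg_int.mono_set hsub
  have hcdf_cont : ContinuousOn (cdf g) (Set.Icc 0 x₀) := by
    exact intervalIntegral.continuousOn_primitive (a := 0) (b := x₀) hg_int'
  have hprim_cont : ContinuousOn (fun y => ∫ ω in (0:ℝ)..y, ω * g ω) (Set.Icc 0 x₀) := by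
    have := intervalIntegral.continuousOn_primitive_interval (a := 0) (b := x₀)
      (f := fun t => t * g t) (by simpa [Set.uIcc_of_le h0.le] using htg_int')
    simpa [Set.uIcc_of_le h0.le] using this
  set H : ℝ → ℝ := fun y => y * cdf g y - ∫ ω in (0:ℝ)..y, ω * g ω with hH
  have hHcont : ContinuousOn H (Set.Icc 0 x₀) :=
    (continuousOn_id.mul hcdf_cont).sub hprim_cont
  have hderiv : ∀ y ∈ Set.Ioo 0 x₀, HasDerivAt H (cdf g y) y := by
    intro y hy
    have hy01 : y ∈ Set.Ioo (0:ℝ) 1 := ⟨hy.1, hy.2.trans h1⟩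
    have hnbhd : Set.Icc (0:ℝ) 1 ∈ nhds y := Icc_mem_nhds hy01.1 hy01.2
    have hgy : ContinuousAt g y := hg_cont.continuousAt hnbhd
    have hmeas : StronglyMeasurableAtFilter g (nhds y) volume :=
      (hg_cont.mono Set.Ioo_subset_Icc_self).stronglyMeasurableAtFilter isOpen_Ioo y hy01
    have hsub' : Set.uIcc (0:ℝ) y ⊆ Set.Icc 0 1 := by
      rw [Set.uIcc_of_le hy.1.le]; exact Set.Icc_subset_Icc le_rfl hy01.2.le
    have hci : IntervalIntegrable g volume 0 y :=
      (hg_int.mono_set hsub').intervalIntegrable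
    have hd1 : HasDerivAt (fun u => ∫ t in (0:ℝ)..u, g t) (g y) y :=
      intervalIntegral.integral_hasDerivAt_right hci hmeas hgy
    have heq : (fun u => ∫ t in (0:ℝ)..u, g t) =ᶠ[nhds y] cdf g := by
      filter_upwards [Ioi_mem_nhds hy.1] with u hu
      rw [intervalIntegral.integral_of_le (le_of_lt hu)]; rfl
    have hd1' : HasDerivAt (cdf g) (g y) y := hd1.congr_of_eventuallyEq heq.symm
    have hd2 : HasDerivAt (fun u => u * cdf g u) (1 * cdf g y + y * g y) y :=
      (hasDerivAt_id y).mul hd1'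
    have hgy2 : ContinuousAt (fun t => t * g t) y := continuousAt_id.mul hgy
    have hmeas2 : StronglyMeasurableAtFilter (fun t => t * g t) (nhds y) volume :=
      ((continuousOn_id.mul hg_cont).mono Set.Ioo_subset_Icc_self).stronglyMeasurableAtFilter
        isOpen_Ioo y hy01
    have hci2 : IntervalIntegrable (fun t => t * g t) volume 0 y :=
      (htg_int.mono_set hsub').intervalIntegrable
    have hd3 : HasDerivAt (fun u => ∫ t in (0:ℝ)..u, t * g t) (y * g y) y :=
      intervalIntegral.integral_hasDerivAt_right hci2 hmeas2 hgy2
    have := hd2.sub hd3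
    exact this.congr_deriv (by ring)
  have hint : IntervalIntegrable (cdf g) volume 0 x₀ := by
    apply ContinuousOn.intervalIntegrable
    rw [Set.uIcc_of_le h0.le]; exact hcdf_cont
  have key := intervalIntegral.integral_eq_sub_of_hasDerivAt_of_le h0.le hHcont hderiv hint
  have hcalG : calG g x₀ = ∫ y in (0:ℝ)..x₀, cdf g y := by
    rw [intervalIntegral.integral_of_le h0.le]; rfl
  have hH0 : H 0 = 0 := by simp [hH, cdf]
  rw [hcalG, key, hH0, hH]
  ring

lemma pos_aux (g : ℝ → ℝ) (hg_int : IntegrableOn g (Set.Icc 0 1))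
    (hg_cont : ContinuousOn g (Set.Icc 0 1)) (hg_pos : ∀ t ∈ Set.Icc (0:ℝ) 1, 0 < g t)
    (hg_one : cdf g 1 = 1) (x₀ : ℝ) (h0 : 0 < x₀) (h1 : x₀ < 1) :
    0 < muG g * cdf g x₀ - ∫ ω in (0:ℝ)..x₀, ω * g ω := by
  have hIocL : Set.Ioc (0:ℝ) x₀ ⊆ Set.Icc 0 1 :=
    (Set.Ioc_subset_Icc_self).trans (Set.Icc_subset_Icc le_rfl h1.le)
  have hIocR : Set.Ioc x₀ (1:ℝ) ⊆ Set.Icc 0 1 :=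
    (Set.Ioc_subset_Icc_self).trans (Set.Icc_subset_Icc h0.le le_rfl)
  have htg_int : IntegrableOn (fun t => t * g t) (Set.Icc 0 1) :=
    (continuousOn_id.mul hg_cont).integrableOn_Icc
  set A := ∫ t in Set.Ioc (0:ℝ) x₀, t * g t with hA
  set B := ∫ t in Set.Ioc x₀ (1:ℝ), t * g t with hB
  set a := ∫ t in Set.Ioc (0:ℝ) x₀, g t with ha
  set b := ∫ t in Set.Ioc x₀ (1:ℝ), g t with hb
  have hunion : Set.Ioc (0:ℝ) x₀ ∪ Set.Ioc x₀ 1 = Set.Ioc (0:ℝ) 1 :=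
    Set.Ioc_union_Ioc_eq_Ioc h0.le h1.le
  have hdisj : Disjoint (Set.Ioc (0:ℝ) x₀) (Set.Ioc x₀ 1) := (Set.Ioc_disjoint_Ioc_of_le le_rfl)
  have hsplit_tg : muG g = A + B := by
    rw [muG, ← hunion, setIntegral_union hdisj measurableSet_Ioc
      (htg_int.mono_set hIocL) (htg_int.mono_set hIocR)]
  have hsplit_g : a + b = 1 := by
    rw [← hg_one, cdf, ← hunion, setIntegral_union hdisj measurableSet_Ioc
      (hg_int.mono_set hIocL) (hg_int.mono_set hIocR)]
  have hcdfx : cdf g x₀ = a := rfl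
  have hintA : (∫ ω in (0:ℝ)..x₀, ω * g ω) = A := intervalIntegral.integral_of_le h0.le
  -- a > 0
  have ha_pos : 0 < a := by
    rw [ha, setIntegral_pos_iff_support_of_nonneg_ae]
    · have hss : Set.Ioc (0:ℝ) x₀ ⊆ Function.support g ∩ Set.Ioc 0 x₀ := by
        intro t ht
        exact ⟨(hg_pos t (hIocL ht)).ne', ht⟩
      calc (0:ENNReal) < volume (Set.Ioc (0:ℝ) x₀) := by
            simp [Real.volume_Ioc, h0]
        _ ≤ volume (Function.support g ∩ Set.Ioc (0:ℝ) x₀) := measure_mono hss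
    · filter_upwards [ae_restrict_mem measurableSet_Ioc] with t ht
      exact (hg_pos t (hIocL ht)).le
    · exact hg_int.mono_set hIocL
  have hb_nonneg : 0 ≤ b := by
    rw [hb]
    exact setIntegral_nonneg measurableSet_Ioc fun t ht => (hg_pos t (hIocR ht)).le
  -- A ≤ x₀ * a
  have hA_le : A ≤ x₀ * a := by
    have : A ≤ ∫ t in Set.Ioc (0:ℝ) x₀, x₀ * g t := by
      apply setIntegral_mono_on (htg_int.mono_set hIocL)
        ((hg_int.mono_set hIocL).smul x₀) measurableSet_Ioc
      intro t ht
      exact mul_le_mul_of_nonneg_right ht.2 (hg_pos t (hIocL ht)).le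
    rwa [integral_const_mul] at this
  -- x₀ * b < B
  have hB_gt : x₀ * b < B := by
    have hInt1 : IntegrableOn (fun t => t * g t) (Set.Ioc x₀ 1) := htg_int.mono_set hIocR
    have hInt2 : IntegrableOn (fun t => x₀ * g t) (Set.Ioc x₀ 1) :=
      (hg_int.mono_set hIocR).const_mul x₀
    have hpos : 0 < ∫ t in Set.Ioc x₀ (1:ℝ), (t * g t - x₀ * g t) := by
      rw [setIntegral_pos_iff_support_of_nonneg_ae]
      · have hss : Set.Ioc x₀ (1:ℝ) ⊆
            Function.support (fun t => t * g t - x₀ * g t) ∩ Set.Ioc x₀ 1 := by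
          intro t ht
          refine ⟨?_, ht⟩
          have : 0 < (t - x₀) * g t := mul_pos (by linarith [ht.1]) (hg_pos t (hIocR ht))
          have h2 : t * g t - x₀ * g t = (t - x₀) * g t := by ring
          simp only [Function.mem_support, h2]
          exact this.ne'
        calc (0:ENNReal) < volume (Set.Ioc x₀ (1:ℝ)) := by
              simp [Real.volume_Ioc, h1]
          _ ≤ _ := measure_mono hss
      · filter_upwards [ae_restrict_mem measurableSet_Ioc] with t ht
        have : 0 ≤ (t - x₀) * g t :=
          mul_nonneg (by linarith [ht.1]) (hg_pos t (hIocR ht)).le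
        simp only [Pi.zero_apply]
        nlinarith [this]
      · exact hInt1.sub hInt2
    have hsub : (∫ t in Set.Ioc x₀ (1:ℝ), (t * g t - x₀ * g t)) = B - x₀ * b := by
      rw [integral_sub hInt1 hInt2, integral_const_mul]
    linarith [hsub ▸ hpos]
  have hA1 : A * (a + b) = A := by rw [hsplit_g]; ring
  rw [hsplit_tg, hcdfx, hintA]
  nlinarith [hA1, mul_lt_mul_of_pos_right hB_gt ha_pos, mul_le_mul_of_nonneg_right hA_le hb_nonneg]

/-- at the unique solution `x₀ ∈ (0,1)` of `ψ(x₀) = μ`,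
`𝒢(x₀) − (x₀−μ)·G(x₀) + ∫_{θ**(x₀)}^{x₀} ((1−F(x₀))/f(θ))·g(ψ(θ,x₀)) dθ > 0`;
in particular already `𝒢(x₀) − (x₀−μ)·G(x₀) = μ·G(x₀) − ∫₀^{x₀} ω g(ω) dω > 0`. -/
theorem stmt11
    (f g : ℝ → ℝ)
    (hf_int : IntegrableOn f (Set.Icc 0 1))
    (hg_int : IntegrableOn g (Set.Icc 0 1))
    (hf_ae : ∀ᵐ t, t ∈ Set.Icc (0:ℝ) 1 → 0 < f t)
    (hg_ae : ∀ᵐ t, t ∈ Set.Icc (0:ℝ) 1 → 0 < g t)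
    (hf_one : cdf f 1 = 1)
    (hg_one : cdf g 1 = 1)
    (hf_cont : ContinuousOn f (Set.Icc 0 1))
    (hf_pos : ∀ t ∈ Set.Icc (0:ℝ) 1, 0 < f t)
    (hg_cont : ContinuousOn g (Set.Icc 0 1))
    (hg_pos : ∀ t ∈ Set.Icc (0:ℝ) 1, 0 < g t)
    (hpsi_mono : StrictMonoOn (psi f) (Set.Icc 0 1))
    (hpsiT_mono : ∀ x ∈ Set.Ioc (0:ℝ) 1,
      StrictMonoOn (psiT f x) (Set.Icc 0 x) ∧ ContinuousOn (psiT f x) (Set.Icc 0 x))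
    (x₀ : ℝ) (hx₀ : x₀ ∈ Set.Ioo (0:ℝ) 1) (hx₀psi : psi f x₀ = muG g)
    (θss : ℝ) (hθss : θss ∈ Set.Ioo 0 x₀) (hθss0 : psiT f x₀ θss = 0) :
    0 < calG g x₀ - (x₀ - muG g) * cdf g x₀ +
        (∫ θ in θss..x₀, ((1 - cdf f x₀) / f θ) * g (psiT f x₀ θ)) ∧
    calG g x₀ - (x₀ - muG g) * cdf g x₀ =
      muG g * cdf g x₀ - (∫ ω in (0:ℝ)..x₀, ω * g ω) ∧
    0 < muG g * cdf g x₀ - ∫ ω in (0:ℝ)..x₀, ω * g ω := by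

  obtain ⟨hx0, hx1⟩ := hx₀
  have hibp := ibp_aux g hg_int hg_cont x₀ hx0 hx1
  have hpos := pos_aux g hg_int hg_cont hg_pos hg_one x₀ hx0 hx1
  have heq : calG g x₀ - (x₀ - muG g) * cdf g x₀ =
      muG g * cdf g x₀ - (∫ ω in (0:ℝ)..x₀, ω * g ω) := by
    rw [hibp]; ring
  refine ⟨?_, heq, hpos⟩
  have hFle : cdf f x₀ ≤ 1 := by
    have hIocR : Set.Ioc x₀ (1:ℝ) ⊆ Set.Icc 0 1 :=
      (Set.Ioc_subset_Icc_self).trans (Set.Icc_subset_Icc hx0.le le_rfl)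
    have hIocL : Set.Ioc (0:ℝ) x₀ ⊆ Set.Icc 0 1 :=
      (Set.Ioc_subset_Icc_self).trans (Set.Icc_subset_Icc le_rfl hx1.le)
    have hunion : Set.Ioc (0:ℝ) x₀ ∪ Set.Ioc x₀ 1 = Set.Ioc (0:ℝ) 1 :=
      Set.Ioc_union_Ioc_eq_Ioc hx0.le hx1.le
    have hsplit : cdf f 1 = cdf f x₀ + ∫ t in Set.Ioc x₀ (1:ℝ), f t := by
      rw [cdf, ← hunion, setIntegral_union (Set.Ioc_disjoint_Ioc_of_le le_rfl) measurableSet_Ioc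
        (hf_int.mono_set hIocL) (hf_int.mono_set hIocR)]
      rfl
    have hnn : 0 ≤ ∫ t in Set.Ioc x₀ (1:ℝ), f t :=
      setIntegral_nonneg measurableSet_Ioc fun t ht => (hf_pos t (hIocR ht)).le
    linarith [hf_one ▸ hsplit]
  have hmono := (hpsiT_mono x₀ ⟨hx0, hx1.le⟩).1
  have hθssIcc : θss ∈ Set.Icc 0 x₀ := ⟨hθss.1.le, hθss.2.le⟩
  have hx₀Icc : x₀ ∈ Set.Icc (0:ℝ) x₀ := ⟨hx0.le, le_rfl⟩
  have hψx₀ : psiT f x₀ x₀ = x₀ := by simp [psiT]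
  have hnonneg : 0 ≤ ∫ θ in θss..x₀, ((1 - cdf f x₀) / f θ) * g (psiT f x₀ θ) := by
    apply intervalIntegral.integral_nonneg hθss.2.le
    intro θ hθ
    have hθIcc : θ ∈ Set.Icc 0 x₀ := ⟨hθss.1.le.trans hθ.1, hθ.2⟩
    have hθ01 : θ ∈ Set.Icc (0:ℝ) 1 := ⟨hθIcc.1, hθIcc.2.trans hx1.le⟩
    have hψlb : 0 ≤ psiT f x₀ θ := by
      rw [← hθss0]
      exact hmono.monotoneOn hθssIcc hθIcc hθ.1
    have hψub : psiT f x₀ θ ≤ 1 := by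
      have := hmono.monotoneOn hθIcc hx₀Icc hθ.2
      rw [hψx₀] at this
      linarith
    exact mul_nonneg (div_nonneg (by linarith) (hf_pos θ hθ01).le)
      (hg_pos _ ⟨hψlb, hψub⟩).le
  linarith [heq, hpos, hnonneg]
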